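/- arXiv:2602.23340 — 2 statements merged into one kernel-verified Lean document; each statement's English description precedes it below -/
import Mathlib

section
/- Let a = { 2n : n ∈ ℕ } and b = { 2n+1 : n ∈ ℕ }, and let X = 𝒫(a) ∪ 𝒫(b) ⊆ 2^ω (identifying subsets of ℕ with their characteristic functions, where 𝒫(c) = {x ⊆ ℕ : x ⊆ c}). Then X has empty interior in the product topology on 2^ω, yet the Raisonnier filter F_X is the Fréchet filter, i.e., F_X consists exactly of the cofinite subsets of ℕ. -/
open Filter Set

/-- The splitting point of two distinct elements of Cantor space. -/
noncomputable def splitPt (x y : ℕ → Bool) : ℕ := sInf {n | x n ≠ y n}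

/-- The set of splitting points of a set `X ⊆ 2^ω`. -/
def splitPts (X : Set (ℕ → Bool)) : Set ℕ :=
  {k | ∃ x ∈ X, ∃ y ∈ X, x ≠ y ∧ splitPt x y = k}

/-- The Raisonnier filter of `X ⊆ 2^ω`: all `a ⊆ ℕ` such that there is a countable
family `(Y n)` covering `X` with `⋃ n, H(Y n) ⊆ a`. -/
def raisonnier (X : Set (ℕ → Bool)) : Set (Set ℕ) :=
  {a | ∃ Y : ℕ → Set (ℕ → Bool), X ⊆ (⋃ n, Y n) ∧ (⋃ n, splitPts (Y n)) ⊆ a}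

lemma splitPt_mem {x y : ℕ → Bool} (h : x ≠ y) : x (splitPt x y) ≠ y (splitPt x y) := by
  have hne : {n | x n ≠ y n}.Nonempty := Function.ne_iff.1 h
  exact Nat.sInf_mem hne

lemma splitPt_agree {x y : ℕ → Bool} {m : ℕ} (h : m < splitPt x y) : x m = y m := by
  by_contra hm
  exact absurd (Nat.sInf_le (show m ∈ {n | x n ≠ y n} from hm)) (not_le.2 h)

lemma splitPt_eq {x y : ℕ → Bool} {k : ℕ} (hne : x k ≠ y k)
    (hag : ∀ m < k, x m = y m) : splitPt x y = k := by
  refine le_antisymm (Nat.sInf_le hne) ?_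
  by_contra h
  push_neg at h
  exact absurd (hag _ h) (splitPt_mem (Function.ne_iff.2 ⟨k, hne⟩))

open Classical in
/-- The diagonalization step: given the prefix below `k`, the value at `k`. -/
noncomputable def diagStep (Y : ℕ → Set (ℕ → Bool)) (e : ℕ → ℕ) (k : ℕ)
    (pref : ℕ → Bool) : Bool :=
  if hk : ∃ n, e n = k then
    if hy : ∃ y, y ∈ Y hk.choose ∧ ∀ m < k, y m = pref m then ! hy.choose k
    else false
  else false

/-- Approximations to the diagonal element. -/
noncomputable def diagP (Y : ℕ → Set (ℕ → Bool)) (e : ℕ → ℕ) : ℕ → ℕ → Bool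
  | 0 => fun _ => false
  | (k+1) => fun m => if m = k then diagStep Y e k (diagP Y e k) else diagP Y e k m

/-- The diagonal element avoiding all `Y n`. -/
noncomputable def diag (Y : ℕ → Set (ℕ → Bool)) (e : ℕ → ℕ) : ℕ → Bool :=
  fun k => diagP Y e (k+1) k

lemma diag_eq (Y : ℕ → Set (ℕ → Bool)) (e : ℕ → ℕ) (k : ℕ) :
    diag Y e k = diagStep Y e k (diagP Y e k) := by
  simp [diag, diagP]

lemma diagP_lt (Y : ℕ → Set (ℕ → Bool)) (e : ℕ → ℕ) :
    ∀ k m, m < k → diagP Y e k m = diag Y e m := by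
  intro k
  induction k with
  | zero => intro m hm; omega
  | succ k ih =>
    intro m hm
    rcases Nat.lt_succ_iff_lt_or_eq.1 hm with h | h
    · have hne : m ≠ k := Nat.ne_of_lt h
      simp only [diagP]
      rw [if_neg hne]
      exact ih m h
    · subst h
      simp only [diagP, if_true]
      rw [diag_eq]

lemma diag_false {Y : ℕ → Set (ℕ → Bool)} {e : ℕ → ℕ} {k : ℕ} (h : ∀ n, e n ≠ k) :
    diag Y e k = false := by
  rw [diag_eq]
  unfold diagStep
  rw [dif_neg]
  push_neg
  exact h

lemma diag_not_mem {Y : ℕ → Set (ℕ → Bool)} {e : ℕ → ℕ}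
    (he : Function.Injective e) (hs : ∀ n, e n ∉ splitPts (Y n)) (n : ℕ) :
    diag Y e ∉ Y n := by
  intro hmem
  set x := diag Y e with hx
  set k := e n with hk
  have hk' : ∃ m, e m = k := ⟨n, rfl⟩
  have hchoose : hk'.choose = n := he hk'.choose_spec
  have hy : ∃ y, y ∈ Y hk'.choose ∧ ∀ m < k, y m = diagP Y e k m := by
    refine ⟨x, by rw [hchoose]; exact hmem, fun m hm => ?_⟩
    rw [diagP_lt Y e k m hm]
  -- the value of x at k
  have hxk : x k = ! hy.choose k := by
    rw [hx, diag_eq]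
    unfold diagStep
    rw [dif_pos hk', dif_pos hy]
  obtain ⟨hy1, hy2⟩ := hy.choose_spec
  set y := hy.choose with hyy
  have hymem : y ∈ Y n := by rw [hyy, ← hchoose]; exact hy1
  have hagree : ∀ m < k, x m = y m := by
    intro m hm
    rw [hy2 m hm, diagP_lt Y e k m hm]
  have hne : x k ≠ y k := by rw [hxk]; cases y k <;> simp
  have : splitPt x y = k := splitPt_eq hne hagree
  exact hs n ⟨x, hmem, y, hymem, Function.ne_iff.2 ⟨k, hne⟩, this⟩

/-- Key lemma: if a countable family covers `{x | ∀ k, x k = true → p k}` and all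
splitting points lie in `a`, then `aᶜ ∩ p` is finite. -/
lemma key {Y : ℕ → Set (ℕ → Bool)} {a : Set ℕ}
    (hsub : (⋃ n, splitPts (Y n)) ⊆ a) {p : ℕ → Prop}
    (hX : {x : ℕ → Bool | ∀ k, x k = true → p k} ⊆ ⋃ n, Y n)
    (hinf : {k | k ∉ a ∧ p k}.Infinite) : False := by
  set q : ℕ → Prop := fun k => k ∉ a ∧ p k with hq
  have hinf' : (setOf q).Infinite := hinf
  set e : ℕ → ℕ := Nat.nth q with he
  have heinj : Function.Injective e := Nat.nth_injective hinf'
  have hem : ∀ n, q (e n) := fun n => Nat.nth_mem_of_infinite hinf' n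
  have hs : ∀ n, e n ∉ splitPts (Y n) := by
    intro n hn
    exact (hem n).1 (hsub (Set.mem_iUnion.2 ⟨n, hn⟩))
  have hmem : diag Y e ∈ {x : ℕ → Bool | ∀ k, x k = true → p k} := by
    intro k hk
    by_cases h : ∃ n, e n = k
    · obtain ⟨n, rfl⟩ := h
      exact (hem n).2
    · push_neg at h
      rw [diag_false h] at hk
      exact absurd hk (by simp)
  obtain ⟨_, ⟨n, rfl⟩, hn⟩ := hX hmem
  exact diag_not_mem heinj hs n hn

theorem stmt8 :
    interior ({x : ℕ → Bool | ∀ n, x n = true → Even n} ∪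
        {x : ℕ → Bool | ∀ n, x n = true → Odd n}) = ∅ ∧
    raisonnier ({x : ℕ → Bool | ∀ n, x n = true → Even n} ∪
        {x : ℕ → Bool | ∀ n, x n = true → Odd n}) = {a : Set ℕ | aᶜ.Finite} := by
  set X : Set (ℕ → Bool) := {x : ℕ → Bool | ∀ n, x n = true → Even n} ∪
      {x : ℕ → Bool | ∀ n, x n = true → Odd n} with hX
  constructor
  · -- empty interior
    rw [Set.eq_empty_iff_forall_notMem]
    intro x hx
    obtain ⟨I, u, hIu, hpi⟩ := isOpen_pi_iff.1 isOpen_interior x hx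
    set M := I.sup id with hM
    set y : ℕ → Bool := fun m => if m ∈ I then x m else true with hy
    have hyI : y ∈ (↑I : Set ℕ).pi u := by
      intro i hi
      have hi' : i ∈ I := hi
      have : y i = x i := by rw [hy]; simp only [if_pos hi']
      rw [this]
      exact (hIu i hi).2
    have hyX : y ∈ X := interior_subset (hpi hyI)
    have hnotI : ∀ m, M < m → m ∉ I := by
      intro m hm hmem
      exact absurd (Finset.le_sup (f := id) hmem) (not_le.2 hm)
    have hm1 : 2 * M + 2 ∉ I := hnotI (2 * M + 2) (by omega)
    have hm2 : 2 * M + 3 ∉ I := hnotI (2 * M + 3) (by omega)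
    have h1 : y (2 * M + 2) = true := by rw [hy]; simp only [if_neg hm1]
    have h2 : y (2 * M + 3) = true := by rw [hy]; simp only [if_neg hm2]
    rcases hyX with h | h
    · have := h _ h2
      rw [Nat.even_iff] at this
      omega
    · have := h _ h1
      rw [Nat.odd_iff] at this
      omega
  · -- Raisonnier filter is Fréchet
    ext a
    simp only [Set.mem_setOf_eq]
    constructor
    · rintro ⟨Y, hcov, hsub⟩
      by_contra hfin
      have hinf : aᶜ.Infinite := hfin
      have : {k | k ∉ a ∧ Even k}.Infinite ∨ {k | k ∉ a ∧ Odd k}.Infinite := by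
        by_contra h
        push_neg at h
        obtain ⟨h1, h2⟩ := h
        apply hinf
        have : aᶜ ⊆ {k | k ∉ a ∧ Even k} ∪ {k | k ∉ a ∧ Odd k} := by
          intro k hk
          rcases Nat.even_or_odd k with hke | hko
          · exact Or.inl ⟨hk, hke⟩
          · exact Or.inr ⟨hk, hko⟩
        exact (h1.union h2).subset this
      rcases this with h | h
      · exact absurd (key hsub ((Set.subset_union_left).trans hcov) h) id
      · exact absurd (key hsub ((Set.subset_union_right).trans hcov) h) id
    · intro hfin
      -- a is cofinite; find N with everything ≥ N in a
      obtain ⟨N, hN⟩ : ∃ N, ∀ k, N ≤ k → k ∈ a := by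
        obtain ⟨B, hB⟩ := hfin.bddAbove
        refine ⟨B + 1, fun k hk => ?_⟩
        by_contra hka
        exact absurd (hB hka) (by omega)
      -- index the prefixes of length N by naturals
      set L : List (Fin N → Bool) := (Finset.univ : Finset (Fin N → Bool)).toList with hL
      set g : ℕ → (Fin N → Bool) := fun n => L.getD n (fun _ => false) with hg
      refine ⟨fun n => {x : ℕ → Bool | ∀ m : Fin N, x m = g n m}, ?_, ?_⟩
      · intro x _
        have hmem : (fun m : Fin N => x m) ∈ L := Finset.mem_toList.2 (Finset.mem_univ _)
        obtain ⟨i, hi, hget⟩ := List.mem_iff_getElem.1 hmem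
        refine Set.mem_iUnion.2 ⟨i, fun m => ?_⟩
        rw [hg]
        simp only [List.getD_eq_getElem L _ hi, hget]
      · rintro k hk
        obtain ⟨n, x, hxm, y, hym, hxy, hsp⟩ := Set.mem_iUnion.1 hk
        apply hN
        by_contra hlt
        push_neg at hlt
        have : x k = y k := by
          have := hxm ⟨k, hlt⟩
          rw [this, ← hym ⟨k, hlt⟩]
        rw [← hsp] at this
        exact splitPt_mem hxy this
end

section
/- The following are equivalent for every X ⊆ 2^ω: (1) the Raisonnier filter F_X is rapid; (2) for every partitioning real d, X goes through some d-binary slalom; (3) for every partitioning real d, the set nat_d[X] = { nat_d(x) : x ∈ X } ⊆ ℕ→ℕ goes through some slalom. -/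
open Filter Set

/-- A family `F` of subsets of ℕ is rapid if for every strictly increasing `f : ℕ → ℕ`
there is `a ∈ F` with `|a ∩ [0, f n)| ≤ n` for all `n`. (The trivial filter `𝒫(ℕ)`
trivially satisfies this.) -/
def IsRapid (F : Set (Set ℕ)) : Prop :=
  ∀ f : ℕ → ℕ, StrictMono f → ∃ a ∈ F, ∀ n, (a ∩ Set.Iio (f n)).ncard ≤ n

/-- `d` is a partitioning real: strictly increasing with `d 0 = 0`.
The associated intervals are `I^d_n = [d n, d (n+1))`. -/
def IsPartitioning (d : ℕ → ℕ) : Prop := StrictMono d ∧ d 0 = 0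

/-- The restriction of `x ∈ 2^ω` to the interval `I^d_n = [d n, d (n+1))`,
as a binary string of length `|I^d_n|`. -/
def restrictI (d : ℕ → ℕ) (x : ℕ → Bool) (n : ℕ) : List Bool :=
  (List.range (d (n + 1) - d n)).map fun i => x (d n + i)

/-- `B` is a `d`-binary slalom: `|B n| ≤ n` and `B n ⊆ {0,1}^{|I^d_n|}` for all `n`. -/
def IsBinarySlalom (d : ℕ → ℕ) (B : ℕ → Finset (List Bool)) : Prop :=
  (∀ n, (B n).card ≤ n) ∧ ∀ n, ∀ s ∈ B n, s.length = d (n + 1) - d n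

/-- `X ⊆ 2^ω` goes through the `d`-binary slalom `B`: every `x ∈ X` satisfies
`x ↾ I^d_n ∈ B n` for all but finitely many `n`. -/
def GoesThroughBin (d : ℕ → ℕ) (X : Set (ℕ → Bool)) (B : ℕ → Finset (List Bool)) : Prop :=
  ∀ x ∈ X, ∀ᶠ n in atTop, restrictI d x n ∈ B n

/-- The natural number represented by a finite binary string (most significant digit first). -/
def natOf (s : List Bool) : ℕ := s.foldl (fun a b => 2 * a + (if b then 1 else 0)) 0

/-- `nat_d : 2^ω → ω^ω`, reading off the binary values of `x` on the intervals `I^d_n`. -/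
def natD (d : ℕ → ℕ) (x : ℕ → Bool) : ℕ → ℕ := fun n => natOf (restrictI d x n)

/-- `S` is a slalom: `|S n| ≤ n` for all `n`. -/
def IsSlalom (S : ℕ → Finset ℕ) : Prop := ∀ n, (S n).card ≤ n

/-- A set of reals `F ⊆ ω^ω` goes through the slalom `S` if every member does. -/
def GoesThrough (F : Set (ℕ → ℕ)) (S : ℕ → Finset ℕ) : Prop :=
  ∀ f ∈ F, ∀ᶠ n in atTop, f n ∈ S n

lemma splitPt_spec {x y : ℕ → Bool} (hxy : x ≠ y) :
    x (splitPt x y) ≠ y (splitPt x y) ∧ ∀ j < splitPt x y, x j = y j := by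
  have hne : {n | x n ≠ y n}.Nonempty := Function.ne_iff.mp hxy
  refine ⟨Nat.sInf_mem hne, fun j hj => ?_⟩
  have := Nat.notMem_of_lt_sInf (s := {n | x n ≠ y n}) hj
  simpa using this

lemma restrictI_length (d : ℕ → ℕ) (x : ℕ → Bool) (n : ℕ) :
    (restrictI d x n).length = d (n + 1) - d n := by simp [restrictI]

lemma restrictI_getElem? (d : ℕ → ℕ) (x : ℕ → Bool) (n i : ℕ) (hi : i < d (n + 1) - d n) :
    (restrictI d x n)[i]? = some (x (d n + i)) := by
  simp [restrictI, List.getElem?_map, List.getElem?_range hi]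

lemma restrictI_congr {d : ℕ → ℕ} {x y : ℕ → Bool} {n : ℕ}
    (h : ∀ j < d (n + 1), x j = y j) : restrictI d x n = restrictI d y n := by
  apply List.map_congr_left
  intro i hi
  exact h _ (by simp [List.mem_range] at hi; omega)

def padBin : ℕ → ℕ → List Bool
  | 0, _ => []
  | L+1, k => padBin L (k / 2) ++ [decide (k % 2 = 1)]

lemma natOf_append_singleton (s : List Bool) (b : Bool) :
    natOf (s ++ [b]) = 2 * natOf s + (if b then 1 else 0) := by
  simp [natOf, List.foldl_append]

lemma padBin_length (L k : ℕ) : (padBin L k).length = L := by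
  induction L generalizing k with
  | zero => rfl
  | succ L ih => simp [padBin, ih]

lemma padBin_natOf (s : List Bool) : padBin s.length (natOf s) = s := by
  induction s using List.reverseRecOn with
  | nil => rfl
  | append_singleton t b ih =>
    rw [natOf_append_singleton]
    have hlen : (t ++ [b]).length = t.length + 1 := by simp
    rw [hlen]
    show padBin t.length ((2 * natOf t + (if b then 1 else 0)) / 2)
        ++ [decide ((2 * natOf t + (if b then 1 else 0)) % 2 = 1)] = t ++ [b]
    have h1 : (2 * natOf t + (if b then 1 else 0)) / 2 = natOf t := by cases b <;> simp <;> omega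
    have h2 : (2 * natOf t + (if b then 1 else 0)) % 2 = (if b then 1 else 0) := by omega
    rw [h1, h2, ih]
    cases b <;> simp

lemma pre_eq {x y : ℕ → Bool} {N : ℕ}
    (hp : (List.range N).map x = (List.range N).map y) : ∀ j < N, x j = y j := by
  intro j hj
  have := congrArg (fun l => l[j]?) hp
  simpa [List.getElem?_map, List.getElem?_range hj] using this

def diffAt (s t : List Bool) (j : ℕ) : Prop :=
  (∀ i < j, s[i]? = t[i]?) ∧ s[j]? ≠ t[j]?

def mkD (g : ℕ → ℕ) : ℕ → ℕ
  | 0 => 0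
  | m + 1 => max (mkD g m + 1) (g (m + 1))

lemma mkD_strictMono (g : ℕ → ℕ) : StrictMono (mkD g) :=
  strictMono_nat_of_lt_succ fun m =>
    lt_of_lt_of_le (Nat.lt_succ_self _) (le_max_left _ _)

lemma exists_interval {d : ℕ → ℕ} (hd : IsPartitioning d) {h n₀ : ℕ} (hge : d n₀ ≤ h) :
    ∃ m, n₀ ≤ m ∧ d m ≤ h ∧ h < d (m + 1) := by
  classical
  set P : ℕ → Prop := fun m => d m ≤ h with hP
  have hP0 : P n₀ := hge
  have hn₀h : n₀ ≤ h := le_trans hd.1.le_apply hge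
  refine ⟨Nat.findGreatest P h, Nat.le_findGreatest hn₀h hP0, Nat.findGreatest_spec hn₀h hP0, ?_⟩
  by_contra hc
  push_neg at hc
  have h1 : Nat.findGreatest P h + 1 ≤ h := le_trans hd.1.le_apply hc
  have := Nat.le_findGreatest h1 (show P (Nat.findGreatest P h + 1) from hc)
  omega

lemma bin_to_rapid {X : Set (ℕ → Bool)}
    (hbin : ∀ d : ℕ → ℕ, IsPartitioning d →
      ∃ B : ℕ → Finset (List Bool), IsBinarySlalom d B ∧ GoesThroughBin d X B) :
    IsRapid (raisonnier X) := by
  classical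
  intro f hf
  set T : ℕ → ℕ := fun M => ∑ m ∈ Finset.range M, m * m with hT
  set d : ℕ → ℕ := mkD (fun m => f (T (m + 1))) with hdd
  have hdpart : IsPartitioning d := ⟨mkD_strictMono _, rfl⟩
  obtain ⟨B, ⟨hBcard, hBlen⟩, hBgo⟩ := hbin d hdpart
  set a : Set ℕ := {h | ∃ m, ∃ p ∈ (B m ×ˢ B m : Finset _), d m ≤ h ∧ h < d (m + 1) ∧
    diffAt p.1 p.2 (h - d m)} with ha
  set Y' : ℕ → List Bool → Set (ℕ → Bool) := fun n₀ σ =>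
    {x | (List.range (d n₀)).map x = σ ∧ ∀ m, n₀ ≤ m → restrictI d x m ∈ B m} with hY'
  set Y : ℕ → Set (ℕ → Bool) := fun k =>
    match (Encodable.decode k : Option (ℕ × List Bool)) with
    | some q => Y' q.1 q.2
    | none => ∅ with hY
  have hcovY : X ⊆ ⋃ k, Y k := by
    intro x hx
    obtain ⟨n₀, hn₀⟩ := eventually_atTop.mp (hBgo x hx)
    refine mem_iUnion.mpr ⟨Encodable.encode (n₀, (List.range (d n₀)).map x), ?_⟩
    have : (Encodable.decode (Encodable.encode (n₀, (List.range (d n₀)).map x)) :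
        Option (ℕ × List Bool)) = some (n₀, (List.range (d n₀)).map x) := Encodable.encodek _
    rw [hY]
    simp only [this]
    exact ⟨rfl, hn₀⟩
  have hsplY : (⋃ k, splitPts (Y k)) ⊆ a := by
    intro h hh
    obtain ⟨k, x, hx, y, hy, hxy, rfl⟩ := mem_iUnion.mp hh
    rcases hq : (Encodable.decode k : Option (ℕ × List Bool)) with _ | q
    · rw [hY] at hx; simp only [hq] at hx; exact absurd hx (notMem_empty x)
    rw [hY] at hx hy; simp only [hq] at hx hy
    obtain ⟨hsp1, hsp2⟩ := splitPt_spec hxy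
    have hpref : ∀ j < d q.1, x j = y j := pre_eq (hx.1.trans hy.1.symm)
    have hhge : d q.1 ≤ splitPt x y := by
      by_contra hlt; push_neg at hlt; exact hsp1 (hpref _ hlt)
    set h := splitPt x y
    obtain ⟨m, hn₀m, hdm, hlt⟩ := exists_interval hdpart hhge
    refine ⟨m, (restrictI d x m, restrictI d y m),
      Finset.mem_product.mpr ⟨hx.2 m hn₀m, hy.2 m hn₀m⟩, hdm, hlt, ?_, ?_⟩
    · intro i hi
      rw [restrictI_getElem? d x m i (by omega), restrictI_getElem? d y m i (by omega)]
      exact congrArg some (hsp2 _ (by omega))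
    · rw [restrictI_getElem? d x m _ (by omega), restrictI_getElem? d y m _ (by omega)]
      have hcanc : d m + (h - d m) = h := by omega
      rw [hcanc]
      simpa using hsp1
  have stepA : ∀ m, (a ∩ Ico (d m) (d (m + 1))).ncard ≤ m * m := by
    intro m
    set Φ : ℕ → List Bool × List Bool := fun h =>
      if hh : ∃ p ∈ (B m ×ˢ B m : Finset _), diffAt p.1 p.2 (h - d m) then hh.choose
      else ([], []) with hΦ
    have hmap : ∀ h ∈ a ∩ Ico (d m) (d (m + 1)),
        Φ h ∈ (B m ×ˢ B m : Finset _) ∧ diffAt (Φ h).1 (Φ h).2 (h - d m) := by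
      rintro h ⟨⟨m', p, hp, hge', hlt', hdiff⟩, hge, hlt⟩
      have hmm : m' = m := by
        rcases lt_trichotomy m' m with hc | hc | hc
        · exfalso; have := hdpart.1.monotone (show m' + 1 ≤ m from hc); omega
        · exact hc
        · exfalso; have := hdpart.1.monotone (show m + 1 ≤ m' from hc); omega
      subst hmm
      have hh : ∃ p ∈ (B m' ×ˢ B m' : Finset _), diffAt p.1 p.2 (h - d m') := ⟨p, hp, hdiff⟩
      have hΦh : Φ h = hh.choose := dif_pos hh
      rw [hΦh]
      exact ⟨hh.choose_spec.1, hh.choose_spec.2⟩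
    have hinj : InjOn Φ (a ∩ Ico (d m) (d (m + 1))) := by
      intro h1 h1m h2 h2m heq
      obtain ⟨-, hd1⟩ := hmap h1 h1m
      obtain ⟨-, hd2⟩ := hmap h2 h2m
      rw [heq] at hd1
      have hsub : h1 - d m = h2 - d m := by
        by_contra hne
        rcases Nat.lt_or_ge (h1 - d m) (h2 - d m) with hc | hc
        · exact hd1.2 (hd2.1 _ hc)
        · exact hd2.2 (hd1.1 _ (lt_of_le_of_ne hc (Ne.symm hne)))
      have hm1 := h1m.2.1
      have hm2 := h2m.2.1
      omega
    calc (a ∩ Ico (d m) (d (m + 1))).ncard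
        ≤ ((B m ×ˢ B m : Finset _) : Set (List Bool × List Bool)).ncard :=
          ncard_le_ncard_of_injOn Φ (fun h hm' => (hmap h hm').1) hinj (Finset.finite_toSet _)
      _ = (B m ×ˢ B m).card := ncard_coe_finset _
      _ ≤ m * m := by
          rw [Finset.card_product]; exact Nat.mul_le_mul (hBcard m) (hBcard m)
  have stepB : ∀ M, (a ∩ Iio (d M)).ncard ≤ T M := by
    intro M
    induction M with
    | zero =>
      have h0 : d 0 = 0 := hdpart.2
      have hempty : Iio (0 : ℕ) = (∅ : Set ℕ) := by ext j; simp
      simp [h0, hempty, hT]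
    | succ M ih =>
      have hsplit : a ∩ Iio (d (M + 1)) ⊆ (a ∩ Iio (d M)) ∪ (a ∩ Ico (d M) (d (M + 1))) := by
        rintro h ⟨hha, hhlt⟩
        rcases lt_or_ge h (d M) with hc | hc
        · exact Or.inl ⟨hha, hc⟩
        · exact Or.inr ⟨hha, hc, hhlt⟩
      calc (a ∩ Iio (d (M + 1))).ncard
          ≤ ((a ∩ Iio (d M)) ∪ (a ∩ Ico (d M) (d (M + 1)))).ncard :=
            ncard_le_ncard hsplit (Finite.union ((finite_Iio _).subset inter_subset_right)
              ((finite_Ico _ _).subset inter_subset_right))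
        _ ≤ (a ∩ Iio (d M)).ncard + (a ∩ Ico (d M) (d (M + 1))).ncard := ncard_union_le _ _
        _ ≤ T M + M * M := Nat.add_le_add ih (stepA M)
        _ = T (M + 1) := (Finset.sum_range_succ _ M).symm
  refine ⟨a, ⟨Y, hcovY, hsplY⟩, ?_⟩
  intro n
  have hex : ∃ M, f n ≤ d M := ⟨f n, hdpart.1.le_apply⟩
  obtain ⟨K, hKspec, hKmin⟩ : ∃ K, f n ≤ d K ∧ ∀ j, j < K → ¬ f n ≤ d j :=
    ⟨Nat.find hex, Nat.find_spec hex, fun j hj => Nat.find_min hex hj⟩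
  have hsb : (a ∩ Iio (f n)).ncard ≤ T K :=
    le_trans (ncard_le_ncard (inter_subset_inter_right _ (Iio_subset_Iio hKspec))
      ((finite_Iio _).subset inter_subset_right)) (stepB _)
  refine hsb.trans ?_
  rcases K with _ | K1
  · simp [hT]
  rcases K1 with _ | M'
  · simp [hT]
  have hmin : ¬ f n ≤ d (M' + 1) := hKmin _ (by omega)
  have hd1 : d (M' + 1) = max (mkD (fun m => f (T (m + 1))) M' + 1) (f (T (M' + 1 + 1))) := by
    rw [hdd]; rfl
  have hge : f (T (M' + 1 + 1)) ≤ d (M' + 1) := by rw [hd1]; exact le_max_right _ _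
  have hTlt : T (M' + 1 + 1) < n := hf.lt_iff_lt.mp (by omega)
  omega

lemma rapid_to_bin {X : Set (ℕ → Bool)} (hR : IsRapid (raisonnier X)) :
    ∀ d : ℕ → ℕ, IsPartitioning d →
      ∃ B : ℕ → Finset (List Bool), IsBinarySlalom d B ∧ GoesThroughBin d X B := by
  classical
  intro d hd
  have hf : StrictMono fun n => d (4 ^ (n + 1)) :=
    hd.1.comp (fun p q h => Nat.pow_lt_pow_right (by norm_num) (by omega))
  obtain ⟨a, ⟨Y, hcov, hspl⟩, hcard⟩ := hR _ hf
  have htfinN : ∀ N : ℕ, (a ∩ Iio N).Finite :=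
    fun N => (finite_Iio _).subset inter_subset_right
  set A : ℕ → ℕ := fun m => (a ∩ Iio (d (m+1))).ncard with hA
  have key : ∀ k m : ℕ, ((fun x => restrictI d x m) '' Y k).Finite ∧
      ((fun x => restrictI d x m) '' Y k).ncard ≤ 2 ^ A m := by
    intro k m
    set t := a ∩ Iio (d (m+1)) with htdef
    have ht := htfinN (d (m+1))
    set Φ : (ℕ → Bool) → Finset ℕ := fun x => ht.toFinset.filter (fun j => x j = true) with hΦ
    have claim : ∀ x ∈ Y k, ∀ y ∈ Y k, Φ x = Φ y → restrictI d x m = restrictI d y m := by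
      intro x hx y hy hxy
      by_cases hxyeq : x = y
      · rw [hxyeq]
      have hsp := splitPt_spec hxyeq
      have hmem : splitPt x y ∈ a := hspl (mem_iUnion.mpr ⟨k, x, hx, y, hy, hxyeq, rfl⟩)
      have hge : d (m+1) ≤ splitPt x y := by
        by_contra hlt
        push_neg at hlt
        have hmt : splitPt x y ∈ ht.toFinset := by
          rw [Set.Finite.mem_toFinset]; exact ⟨hmem, hlt⟩
        have hiff : (splitPt x y ∈ Φ x) ↔ (splitPt x y ∈ Φ y) := by rw [hxy]
        simp only [hΦ, Finset.mem_filter, hmt, true_and] at hiff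
        apply hsp.1
        cases hx1 : x (splitPt x y) <;> cases hy1 : y (splitPt x y) <;> simp_all
      exact restrictI_congr (fun j hj => hsp.2 j (lt_of_lt_of_le hj hge))
    set r : (ℕ → Bool) → List Bool := fun x => restrictI d x m with hr
    set g : Finset ℕ → List Bool := fun F =>
      if hF : ∃ z, z ∈ Y k ∧ Φ z = F then r hF.choose else [] with hg
    have hsub : r '' Y k ⊆ g '' (Φ '' Y k) := by
      rintro _ ⟨x, hx, rfl⟩
      refine ⟨Φ x, ⟨x, hx, rfl⟩, ?_⟩
      have hF : ∃ z, z ∈ Y k ∧ Φ z = Φ x := ⟨x, hx, rfl⟩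
      simp only [hg, dif_pos hF]
      exact claim _ hF.choose_spec.1 _ hx hF.choose_spec.2
    have hpow : Φ '' Y k ⊆ ↑(ht.toFinset.powerset) := by
      rintro _ ⟨x, hx, rfl⟩
      simp only [Finset.coe_powerset, Set.mem_preimage, Set.mem_powerset_iff, hΦ]
      exact_mod_cast Finset.filter_subset _ _
    have hΦfin : (Φ '' Y k).Finite := (ht.toFinset.powerset.finite_toSet).subset hpow
    have hfin : (r '' Y k).Finite := (hΦfin.image g).subset hsub
    refine ⟨hfin, ?_⟩
    calc (r '' Y k).ncard ≤ (g '' (Φ '' Y k)).ncard := ncard_le_ncard hsub (hΦfin.image g)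
      _ ≤ (Φ '' Y k).ncard := ncard_image_le hΦfin
      _ ≤ (↑(ht.toFinset.powerset) : Set (Finset ℕ)).ncard :=
          ncard_le_ncard hpow (Finset.finite_toSet _)
      _ = 2 ^ A m := by
          rw [ncard_coe_finset, Finset.card_powerset]
          congr 1
          exact (ncard_eq_toFinset_card _ ht).symm
  refine ⟨fun m => (Finset.range (Nat.sqrt m)).biUnion (fun k => ((key k m).1).toFinset),
    ⟨?_, ?_⟩, ?_⟩
  · intro m
    have hb := Finset.card_biUnion_le (s := Finset.range (Nat.sqrt m))
      (t := fun k => ((key k m).1).toFinset)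
    have hsum : ∑ k ∈ Finset.range (Nat.sqrt m), ((key k m).1).toFinset.card
        ≤ Nat.sqrt m * 2 ^ A m := by
      have := Finset.sum_le_card_nsmul (Finset.range (Nat.sqrt m))
        (fun k => ((key k m).1).toFinset.card) (2 ^ A m) (fun k _ => by
        show ((key k m).1).toFinset.card ≤ 2 ^ A m
        rw [← ncard_eq_toFinset_card _ (key k m).1]; exact (key k m).2)
      simpa [smul_eq_mul] using this
    refine hb.trans (hsum.trans ?_)
    rcases Nat.eq_zero_or_pos m with rfl | hm
    · simp
    set n := Nat.log 4 m with hn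
    have h1 : 4 ^ n ≤ m := Nat.pow_log_le_self 4 hm.ne'
    have h2 : m < 4 ^ (n + 1) := Nat.lt_pow_succ_log_self (by norm_num) m
    have hAn : A m ≤ n := by
      have hsubs : a ∩ Iio (d (m+1)) ⊆ a ∩ Iio (d (4 ^ (n+1))) :=
        inter_subset_inter_right _ (Iio_subset_Iio (hd.1.monotone (by omega)))
      exact (ncard_le_ncard hsubs (htfinN _)).trans (hcard n)
    have h2n : 2 ^ A m ≤ Nat.sqrt m := by
      refine Nat.le_sqrt.mpr ?_
      calc 2 ^ A m * 2 ^ A m = 4 ^ A m := by rw [← mul_pow]; norm_num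
        _ ≤ 4 ^ n := Nat.pow_le_pow_right (by norm_num) hAn
        _ ≤ m := h1
    calc Nat.sqrt m * 2 ^ A m ≤ Nat.sqrt m * Nat.sqrt m := Nat.mul_le_mul_left _ h2n
      _ ≤ m := Nat.sqrt_le m
  · intro m s hs
    obtain ⟨k, -, hks⟩ := Finset.mem_biUnion.mp hs
    rw [Set.Finite.mem_toFinset] at hks
    obtain ⟨x, -, rfl⟩ := hks
    exact restrictI_length d x m
  · intro x hx
    obtain ⟨k, hk⟩ := mem_iUnion.mp (hcov hx)
    rw [eventually_atTop]
    refine ⟨(k+1)*(k+1), fun m hm => ?_⟩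
    refine Finset.mem_biUnion.mpr ⟨k, Finset.mem_range.mpr ?_, ?_⟩
    · exact lt_of_lt_of_le (Nat.lt_succ_self k) (Nat.le_sqrt.mpr hm)
    · rw [Set.Finite.mem_toFinset]; exact ⟨x, hk, rfl⟩

lemma bin_iff_nat (X : Set (ℕ → Bool)) (d : ℕ → ℕ) :
    (∃ B : ℕ → Finset (List Bool), IsBinarySlalom d B ∧ GoesThroughBin d X B) ↔
    (∃ S : ℕ → Finset ℕ, IsSlalom S ∧ GoesThrough (natD d '' X) S) := by
  constructor
  · rintro ⟨B, ⟨hcard, _⟩, hgo⟩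
    refine ⟨fun n => (B n).image natOf, fun n => (Finset.card_image_le).trans (hcard n), ?_⟩
    rintro f ⟨x, hx, rfl⟩
    filter_upwards [hgo x hx] with n hn
    exact Finset.mem_image_of_mem _ hn
  · rintro ⟨S, hS, hgo⟩
    refine ⟨fun n => (S n).image (padBin (d (n+1) - d n)),
      ⟨fun n => (Finset.card_image_le).trans (hS n), ?_⟩, ?_⟩
    · intro n s hs
      obtain ⟨k, -, rfl⟩ := Finset.mem_image.mp hs
      exact padBin_length _ _
    · intro x hx
      filter_upwards [hgo (natD d x) ⟨x, hx, rfl⟩] with n hn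
      have : padBin (d (n+1) - d n) (natD d x n) = restrictI d x n := by
        rw [show natD d x n = natOf (restrictI d x n) from rfl,
          ← restrictI_length d x n, padBin_natOf]
      rw [← this]
      exact Finset.mem_image_of_mem _ hn

theorem stmt14 (X : Set (ℕ → Bool)) :
    (IsRapid (raisonnier X) ↔
      ∀ d : ℕ → ℕ, IsPartitioning d →
        ∃ B : ℕ → Finset (List Bool), IsBinarySlalom d B ∧ GoesThroughBin d X B) ∧
    (IsRapid (raisonnier X) ↔
      ∀ d : ℕ → ℕ, IsPartitioning d →
        ∃ S : ℕ → Finset ℕ, IsSlalom S ∧ GoesThrough (natD d '' X) S) := by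
  have h1 : IsRapid (raisonnier X) ↔
      ∀ d : ℕ → ℕ, IsPartitioning d →
        ∃ B : ℕ → Finset (List Bool), IsBinarySlalom d B ∧ GoesThroughBin d X B :=
    ⟨fun h => rapid_to_bin h, bin_to_rapid⟩
  exact ⟨h1, h1.trans (forall_congr' fun d => imp_congr_right fun _ => bin_iff_nat X d)⟩
end
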